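/- For any locally small (possibly large) category K, the category PK of small presheaves on K is complete if and only if PK has all limits of representables; concretely, if and only if for every small category D and every functor S : D → K, the presheaf A ↦ lim_{d ∈ D} K(A, S d) : K^op → Set is small. -/

import Mathlib

open CategoryTheory CategoryTheory.Limits Opposite

universe w v v' u u'

/-- A functor `S : K ⥤ M` is (`w`-)small if it is the left Kan extension of its
restriction to some small full subcategory of `K`. -/
def IsSmallFunctor {K : Type u} [Category.{v} K] {M : Type u'} [Category.{v'} M]
    (S : K ⥤ M) : Prop :=
  ∃ P : K → Prop, Small.{w} (Subtype P) ∧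
    S.IsLeftKanExtension (𝟙 (ObjectProperty.ι P ⋙ S))

/-- Representable presheaves are small. -/
theorem isSmallFunctor_yoneda_obj {K : Type u} [Category.{v} K] (A : K) :
    IsSmallFunctor.{w} (yoneda.obj A) := by
  refine ⟨fun X => X = op A, ?_, ?_⟩
  · have : Subsingleton {X : Kᵒᵖ // X = op A} :=
      ⟨fun X Y => Subtype.ext (X.2.trans Y.2.symm)⟩
    infer_instance
  · set P : Kᵒᵖ → Prop := fun X => X = op A with hP
    set ι := ObjectProperty.ι P with hι
    constructor
    refine ⟨IsInitial.ofUniqueHom (fun E => StructuredArrow.homMk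
      (yonedaEquiv.symm (E.hom.app ⟨op A, rfl⟩ (𝟙 A))) ?_) ?_⟩
    · ext X f
      rcases X with ⟨X, rfl⟩
      have hnat := ConcreteCategory.congr_hom (E.hom.naturality
        (ObjectProperty.homMk f.op : (⟨op A, rfl⟩ : ObjectProperty.FullSubcategory P) ⟶ ⟨op A, rfl⟩)) (𝟙 A)
      simp [ι] at hnat ⊢
      exact hnat.symm
    · intro E m
      apply StructuredArrow.hom_ext
      ext Y (g : unop Y ⟶ A)
      have hx : m.right.app (op A) (𝟙 A) = E.hom.app ⟨op A, rfl⟩ (𝟙 A) :=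
        ConcreteCategory.congr_hom (NatTrans.congr_app m.w ⟨op A, rfl⟩) (𝟙 A)
      have hnat : m.right.app Y (g ≫ 𝟙 A) = E.right.map (Quiver.Hom.op g) (m.right.app (op A) (𝟙 A)) :=
        ConcreteCategory.congr_hom (m.right.naturality (Quiver.Hom.op g : op A ⟶ Y)) (𝟙 A)
      show m.right.app Y g = (yonedaEquiv.symm (E.hom.app ⟨op A, rfl⟩ (𝟙 A))).app Y g
      rw [Category.comp_id, hx] at hnat
      exact hnat

/-- The category of small presheaves on `K`. -/
abbrev SmallPresheaf (K : Type u) [Category.{v} K] : Type (max u (v + 1)) :=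
  ObjectProperty.FullSubcategory (fun F : Kᵒᵖ ⥤ Type v => IsSmallFunctor.{v} F)

/-- The Yoneda embedding of `K` into its category of small presheaves. -/
def smallYoneda (K : Type u) [Category.{v} K] : K ⥤ SmallPresheaf K where
  obj A := ⟨yoneda.obj A, isSmallFunctor_yoneda_obj A⟩
  map f := ObjectProperty.homMk (yoneda.map f)

/-- `L` is a limit of `S : C ⥤ A` weighted by `φ : C ⥤ Type v`, i.e. morphisms `a ⟶ L`
correspond, naturally in `a`, to natural transformations `φ ⟶ A(a, S-)`. -/
def IsWeightedLimit {C : Type u} [Category.{v} C] {A : Type u'} [Category.{v'} A]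
    (φ : C ⥤ Type v) (S : C ⥤ A) (L : A) : Prop :=
  ∃ e : ∀ a : A, (a ⟶ L) ≃
      ((φ ⋙ uliftFunctor.{v'}) ⟶ (S ⋙ coyoneda.obj (op a) ⋙ uliftFunctor.{v})),
    ∀ (a a' : A) (f : a' ⟶ a) (g : a ⟶ L) (c : C) (x : φ.obj c),
      (e a' (f ≫ g)).app c ⟨x⟩ = ⟨f ≫ ((e a g).app c ⟨x⟩).down⟩

/-- `L` is a colimit of `T : Cᵒᵖ ⥤ A` weighted by `φ : C ⥤ Type v`, i.e. morphisms `L ⟶ a`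
correspond, naturally in `a`, to natural transformations `φ ⟶ A(T-, a)`. -/
def IsWeightedColimit {C : Type u} [Category.{v} C] {A : Type u'} [Category.{v'} A]
    (φ : C ⥤ Type v) (T : Cᵒᵖ ⥤ A) (L : A) : Prop :=
  ∃ e : ∀ a : A, (L ⟶ a) ≃
      ((φ ⋙ uliftFunctor.{v'}) ⟶ (T.rightOp ⋙ yoneda.obj a ⋙ uliftFunctor.{v})),
    ∀ (a a' : A) (f : a ⟶ a') (g : L ⟶ a) (c : C) (x : φ.obj c),
      (e a' (g ≫ f)).app c ⟨x⟩ = ⟨((e a g).app c ⟨x⟩).down ≫ f⟩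

/-- A class of weights with small domains. -/
def WeightClass : Type (v + 1) :=
  ∀ C : Cat.{v, v}, (C ⥤ Type v) → Prop

/-- A category is `Φ`-complete if it has all `φ`-weighted limits for `φ ∈ Φ`. -/
def PhiComplete (Φ : WeightClass.{v}) (A : Type u) [Category.{v'} A] : Prop :=
  ∀ (C : Cat.{v, v}) (φ : C ⥤ Type v), Φ C φ →
    ∀ S : C ⥤ A, ∃ L : A, IsWeightedLimit φ S L

/-- A category is `Φ`-cocomplete if it has all `φ`-weighted colimits for `φ ∈ Φ`. -/
def PhiCocomplete (Φ : WeightClass.{v}) (A : Type u) [Category.{v'} A] : Prop :=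
  ∀ (C : Cat.{v, v}) (φ : C ⥤ Type v), Φ C φ →
    ∀ T : Cᵒᵖ ⥤ A, ∃ L : A, IsWeightedColimit φ T L

/-- A functor is `Φ`-continuous if it preserves all `φ`-weighted limits for `φ ∈ Φ`. -/
def PhiContinuous (Φ : WeightClass.{v}) {A : Type u} [Category.{v'} A]
    {B : Type u'} [Category.{w} B] (F : A ⥤ B) : Prop :=
  ∀ (C : Cat.{v, v}) (φ : C ⥤ Type v), Φ C φ →
    ∀ (S : C ⥤ A) (L : A), IsWeightedLimit φ S L → IsWeightedLimit φ (S ⋙ F) (F.obj L)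

/-- The closure of a collection `P` of objects of `A` under `Φ`-weighted colimits. -/
inductive PhiClosure (Φ : WeightClass.{v}) {A : Type u} [Category.{v'} A]
    (P : A → Prop) : A → Prop
  | base {X : A} (hX : P X) : PhiClosure Φ P X
  | colim {C : Cat.{v, v}} (φ : C ⥤ Type v) (hφ : Φ C φ) (T : Cᵒᵖ ⥤ A)
      (hT : ∀ c : Cᵒᵖ, PhiClosure Φ P (T.obj c)) {L : A}
      (hL : IsWeightedColimit φ T L) : PhiClosure Φ P L

/-- The smallness condition on a class of weights: for every small `C`, the closure of the
representables in the presheaf category of `C` under `Φ`-weighted colimits is small. -/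
def SmallnessCondition (Φ : WeightClass.{v}) : Prop :=
  ∀ C : Cat.{v, v}, EssentiallySmall.{v} (ObjectProperty.FullSubcategory (PhiClosure Φ
    (fun F : Cᵒᵖ ⥤ Type v => ∃ c : C, Nonempty (F ≅ yoneda.obj c))))

/-- The soundness condition on a class of weights: for every small `Φ`-complete `D` and every
`Φ`-continuous `ψ : D ⥤ Type v`, the weighted-colimit functor `ψ * (-) : [Dᵒᵖ, Type v] ⥤ Type v`
(i.e. the small-colimit-preserving extension of `ψ` along the Yoneda embedding) is
`Φ`-continuous. -/
def SoundnessCondition (Φ : WeightClass.{v}) : Prop :=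
  ∀ D : Cat.{v, v}, PhiComplete Φ D → ∀ ψ : D ⥤ Type v, PhiContinuous Φ ψ →
    ∀ T : (Dᵒᵖ ⥤ Type v) ⥤ Type v, PreservesColimitsOfSize.{v, v} T →
      Nonempty ((yoneda : D ⥤ _) ⋙ T ≅ ψ) → PhiContinuous Φ T

/-- `φ` belongs to the saturation of `Φ` if it lies in the closure of the representables
under `Φ`-weighted colimits in the presheaf category over its domain. -/
def InSaturation (Φ : WeightClass.{v}) (C : Cat.{v, v}) (φ : C ⥤ Type v) : Prop :=
  PhiClosure Φ (fun F : C ⥤ Type v => ∃ c : Cᵒᵖ, Nonempty (F ≅ coyoneda.obj c)) φ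

/-- A category `J` is `α`-filtered when every diagram with fewer than `α` arrows
admits a cocone. -/
def IsCardinalFiltered (J : Type u) [Category.{v'} J] (α : Cardinal.{v}) : Prop :=
  ∀ D : Cat.{v, v}, Cardinal.mk (Arrow D) < α → ∀ F : D ⥤ J, Nonempty (Cocone F)

/-- An object `X` is `α`-presentable when its hom-functor preserves `α`-filtered colimits. -/
def IsPresentableObj {K : Type u} [Category.{v} K] (α : Cardinal.{v}) (X : K) : Prop :=
  ∀ J : Cat.{v, v}, IsCardinalFiltered J α →
    PreservesColimitsOfShape J (coyoneda.obj (op X))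

/-- `K` is locally `α`-presentable: it is cocomplete and has a small full subcategory of
`α`-presentable objects such that every object is an `α`-filtered colimit of objects
from it. -/
def IsLocallyPresentableAt (K : Type u) [Category.{v} K] (α : Cardinal.{v}) : Prop :=
  HasColimitsOfSize.{v, v} K ∧ α.IsRegular ∧
    ∃ P : K → Prop, Small.{v} (Subtype P) ∧ (∀ X, P X → IsPresentableObj α X) ∧
      ∀ X : K, ∃ J : Cat.{v, v}, IsCardinalFiltered J α ∧
        ∃ (F : J ⥤ K) (c : Cocone F),
          (∀ j, P (F.obj j)) ∧ c.pt = X ∧ Nonempty (IsColimit c)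

/-- `K` is locally presentable. -/
def IsLocallyPresentable (K : Type u) [Category.{v} K] : Prop :=
  ∃ α : Cardinal.{v}, IsLocallyPresentableAt K α

/-- `PF : PK ⥤ PL` is the (essentially unique) functor sending a small presheaf `X` to the
left Kan extension of `X` along `Fᵒᵖ`. -/
def IsPshExtensionOf {K : Type u} {L : Type u'} [Category.{v} K] [Category.{v} L]
    (F : K ⥤ L) (PF : SmallPresheaf K ⥤ SmallPresheaf L) : Prop :=
  ∃ ε : ObjectProperty.ι (fun X : Kᵒᵖ ⥤ Type v => IsSmallFunctor.{v} X) ⟶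
      PF ⋙ ObjectProperty.ι (fun X : Lᵒᵖ ⥤ Type v => IsSmallFunctor.{v} X) ⋙
        (Functor.whiskeringLeft Kᵒᵖ Lᵒᵖ (Type v)).obj F.op,
    ∀ X : SmallPresheaf K, Functor.IsLeftKanExtension ((PF.obj X).obj) (ε.app X)

open MonoidalCategory in
/-- `D` is the Day convolution `∫^{A,B} K(-, A ⊗ B) × F A × G B` of the presheaves
`F` and `G`: it carries a universal wedge. -/
def IsDayConvolution {K : Type u} [Category.{v} K] [MonoidalCategory K]
    (F G D : Kᵒᵖ ⥤ Type v) : Prop :=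
  ∃ u : ∀ A B : K, F.obj (op A) → G.obj (op B) → D.obj (op (A ⊗ B)),
    (∀ (A A' B B' : K) (f : A' ⟶ A) (g : B' ⟶ B) (x : F.obj (op A)) (y : G.obj (op B)),
      u A' B' (F.map f.op x) (G.map g.op y)
        = D.map (MonoidalCategory.tensorHom f g).op (u A B x y)) ∧
    ∀ (H : Kᵒᵖ ⥤ Type v)
      (p : ∀ A B : K, F.obj (op A) → G.obj (op B) → H.obj (op (A ⊗ B))),
      (∀ (A A' B B' : K) (f : A' ⟶ A) (g : B' ⟶ B) (x : F.obj (op A)) (y : G.obj (op B)),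
        p A' B' (F.map f.op x) (G.map g.op y)
          = H.map (MonoidalCategory.tensorHom f g).op (p A B x y)) →
      ∃! τ : D ⟶ H, ∀ (A B : K) (x : F.obj (op A)) (y : G.obj (op B)),
        τ.app (op (A ⊗ B)) (u A B x y) = p A B x y

/-- The restricted Yoneda embedding of `M` into presheaves on the full subcategory of
`β`-presentable objects. -/
def restrictedYoneda (M : Type u) [Category.{v} M] (β : Cardinal.{v}) :
    M ⥤ ((ObjectProperty.FullSubcategory (IsPresentableObj β : M → Prop))ᵒᵖ ⥤ Type v) :=
  yoneda ⋙ (Functor.whiskeringLeft _ _ _).obj (ObjectProperty.ι _).op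

namespace S7Aux

variable {K : Type u} [Category.{v} K]


/-- A triple presenting an element of `G.obj X` from an object satisfying `P`. -/
structure Tri (P : Kᵒᵖ → Prop) (G : Kᵒᵖ ⥤ Type v) (X : Kᵒᵖ) : Type (max u v) where
  A : Kᵒᵖ
  hA : P A
  φ : A ⟶ X
  y : G.obj A

variable {P : Kᵒᵖ → Prop} {G : Kᵒᵖ ⥤ Type v}

def trep {X : Kᵒᵖ} (r : Tri P G X) : G.obj X := G.map r.φ r.y

def tstep {X : Kᵒᵖ} (r s : Tri P G X) : Prop :=
  ∃ u : r.A ⟶ s.A, u ≫ s.φ = r.φ ∧ G.map u r.y = s.y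

lemma tstep_refl {X : Kᵒᵖ} (r : Tri P G X) : tstep r r :=
  ⟨𝟙 _, by simp, by simp⟩

lemma tstep_trep {X : Kᵒᵖ} {r s : Tri P G X} (h : tstep r s) : trep r = trep s := by
  obtain ⟨u, hu, hy⟩ := h
  simp only [trep, ← hu, FunctorToTypes.map_comp_apply, hy]

lemma tstep_of_eq {X : Kᵒᵖ} {r s : Tri P G X} (h : r = s) : tstep r s := h ▸ tstep_refl r

/-- Pointwise characterization of being a left Kan extension of the restriction to `P`. -/
def PW (P : Kᵒᵖ → Prop) (G : Kᵒᵖ ⥤ Type v) : Prop :=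
  ∀ (X : Kᵒᵖ) (x : G.obj X),
    (∃ r : Tri P G X, trep r = x) ∧
      ∀ r r' : Tri P G X, trep r = x → trep r' = x → Relation.EqvGen tstep r r'

lemma eqvgen_map {α β : Type*} {r : α → α → Prop} {s : β → β → Prop} (f : α → β)
    (hf : ∀ a b, r a b → s (f a) (f b)) {a b : α} (h : Relation.EqvGen r a b) :
    Relation.EqvGen s (f a) (f b) := by
  induction h with
  | rel _ _ h => exact .rel _ _ (hf _ _ h)
  | refl => exact .refl _
  | symm _ _ _ ih => exact ih.symm _ _
  | trans _ _ _ _ _ ih1 ih2 => exact ih1.trans _ _ _ ih2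

lemma pw_mono {P P' : Kᵒᵖ → Prop} (hsub : ∀ A, P A → P' A) (h : PW P G) : PW P' G := by
  intro X x
  obtain ⟨⟨r, hr⟩, hconn⟩ := h X x
  constructor
  · exact ⟨⟨r.A, hsub _ r.hA, r.φ, r.y⟩, hr⟩
  · -- connect two `P'`-triples through `P`-triples
    have key : ∀ s : Tri P' G X, trep s = x →
        ∃ sP : Tri P G X, trep sP = x ∧
          Relation.EqvGen (tstep (P := P')) ⟨sP.A, hsub _ sP.hA, sP.φ, sP.y⟩ s := by
      intro s hs
      obtain ⟨⟨q, hq⟩, _⟩ := h s.A s.y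
      refine ⟨⟨q.A, q.hA, q.φ ≫ s.φ, q.y⟩, ?_, ?_⟩
      · simp only [trep, FunctorToTypes.map_comp_apply]
        rw [show G.map q.φ q.y = s.y from hq]
        exact hs
      · exact .rel _ _ ⟨q.φ, rfl, hq⟩
    intro s s' hs hs'
    obtain ⟨sP, hsP, hlink⟩ := key s hs
    obtain ⟨sP', hsP', hlink'⟩ := key s' hs'
    have hmid := hconn sP sP' hsP hsP'
    have hmid' := eqvgen_map (s := tstep) (f := fun t : Tri P G X => (⟨t.A, hsub _ t.hA, t.φ, t.y⟩ : Tri P' G X))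
      (fun a b hab => by obtain ⟨u, h1, h2⟩ := hab; exact ⟨u, h1, h2⟩) hmid
    exact ((hlink.symm _ _).trans _ _ _ hmid').trans _ _ _ hlink'

lemma pw_iso {G G' : Kᵒᵖ ⥤ Type v} (e : G ≅ G') (h : PW P G) : PW P G' := by
  intro X x
  obtain ⟨⟨r, hr⟩, hconn⟩ := h X (e.inv.app X x)
  have heinv : ∀ (Y : Kᵒᵖ) (z : G.obj Y), e.inv.app Y (e.hom.app Y z) = z := fun Y z => by
    simp
  have hehom : ∀ (Y : Kᵒᵖ) (z : G'.obj Y), e.hom.app Y (e.inv.app Y z) = z := fun Y z => by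
    simp
  have hnat : ∀ {A : Kᵒᵖ} (φ : A ⟶ X) (z : G.obj A),
      G'.map φ (e.hom.app A z) = e.hom.app X (G.map φ z) := fun φ z =>
    (ConcreteCategory.congr_hom (e.hom.naturality φ) z).symm
  constructor
  · refine ⟨⟨r.A, r.hA, r.φ, e.hom.app _ r.y⟩, ?_⟩
    simp only [trep] at hr ⊢
    rw [hnat, hr, hehom]
  · intro s s' hs hs'
    -- pull back
    have hpull : ∀ (s : Tri P G' X), trep s = x →
        trep (⟨s.A, s.hA, s.φ, e.inv.app _ s.y⟩ : Tri P G X) = e.inv.app X x := by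
      intro s hs
      simp only [trep] at hs ⊢
      have := ConcreteCategory.congr_hom (e.inv.naturality s.φ) s.y
      simp only [types_comp_apply] at this
      rw [← this, hs]
    have hmid := hconn _ _ (hpull s hs) (hpull s' hs')
    have hmap := eqvgen_map (s := tstep)
      (f := fun t : Tri P G X => (⟨t.A, t.hA, t.φ, e.hom.app _ t.y⟩ : Tri P G' X))
      (fun a b hab => by
        obtain ⟨u, h1, h2⟩ := hab
        refine ⟨u, h1, ?_⟩
        have := ConcreteCategory.congr_hom (e.hom.naturality u) a.y
        simp only [types_comp_apply] at this
        rw [← this, h2]) hmid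
    have hfix : ∀ (s : Tri P G' X),
        (⟨s.A, s.hA, s.φ, e.hom.app _ (e.inv.app _ s.y)⟩ : Tri P G' X) = s := by
      intro s
      rw [hehom]
    simp only at hmap
    rw [hfix s, hfix s'] at hmap
    exact hmap

section Bridge

variable (P : Kᵒᵖ → Prop) (G : Kᵒᵖ ⥤ Type v)

/-- Value of a candidate extension on a presentation triple. -/
abbrev Ext := Functor.LeftExtension (ObjectProperty.ι P)
    (ObjectProperty.ι P ⋙ G)

def eval (E : Functor.LeftExtension (ObjectProperty.ι P)
    (ObjectProperty.ι P ⋙ G)) {X : Kᵒᵖ} (r : Tri P G X) : E.right.obj X :=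
  E.right.map r.φ (E.hom.app ⟨r.A, r.hA⟩ r.y)

lemma eval_tstep (E : Ext P G) {X : Kᵒᵖ} {r s : Tri P G X} (h : tstep r s) :
    eval P G E r = eval P G E s := by
  obtain ⟨u, hu, hy⟩ := h
  have hnat := ConcreteCategory.congr_hom (E.hom.naturality
    (show (⟨r.A, r.hA⟩ : ObjectProperty.FullSubcategory P) ⟶ ⟨s.A, s.hA⟩ from ObjectProperty.homMk u)) r.y
  simp only [Functor.comp_obj, Functor.comp_map, types_comp_apply, Functor.whiskeringLeft_obj_obj,
    Functor.whiskeringLeft_obj_map, Functor.whiskerLeft_app, ObjectProperty.ι_obj,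
    ObjectProperty.ι_map] at hnat
  simp only [ObjectProperty.homMk_hom] at hnat
  simp only [eval, ← hy]
  rw [hnat, ← FunctorToTypes.map_comp_apply, hu]

lemma eval_eqvgen (E : Ext P G) {X : Kᵒᵖ} {r s : Tri P G X} (h : Relation.EqvGen tstep r s) :
    eval P G E r = eval P G E s := by
  induction h with
  | rel _ _ h => exact eval_tstep P G E h
  | refl => rfl
  | symm _ _ _ ih => exact ih.symm
  | trans _ _ _ _ _ ih1 ih2 => exact ih1.trans ih2

variable {P G} in
lemma trep_comp {X X' : Kᵒᵖ} (ψ : X ⟶ X') (r : Tri P G X) :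
    trep (⟨r.A, r.hA, r.φ ≫ ψ, r.y⟩ : Tri P G X') = G.map ψ (trep r) := by
  simp [trep, FunctorToTypes.map_comp_apply]

section
variable (hpw : PW P G)

noncomputable def tauApp (E : Ext P G) (X : Kᵒᵖ) (x : G.obj X) : E.right.obj X :=
  eval P G E (hpw X x).1.choose

lemma tauApp_eq (E : Ext P G) {X : Kᵒᵖ} (x : G.obj X) {r : Tri P G X} (hr : trep r = x) :
    tauApp P G hpw E X x = eval P G E r :=
  eval_eqvgen P G E ((hpw X x).2 _ r (hpw X x).1.choose_spec hr)

noncomputable def tau (E : Ext P G) : @Quiver.Hom (Kᵒᵖ ⥤ Type v) CategoryStruct.toQuiver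
    (Functor.LeftExtension.mk G (𝟙 (ObjectProperty.ι P ⋙ G))).right E.right where
  app X := ↾fun x => tauApp P G hpw E X x
  naturality X X' ψ := by
    refine ConcreteCategory.hom_ext _ _ fun x => ?_
    show tauApp P G hpw E X' (G.map ψ x) = E.right.map ψ (tauApp P G hpw E X x)
    obtain ⟨r, hr⟩ : ∃ r : Tri P G X, trep r = x := ⟨_, (hpw X x).1.choose_spec⟩
    have h1 : tauApp P G hpw E X' (G.map ψ x) =
        eval P G E ⟨r.A, r.hA, r.φ ≫ ψ, r.y⟩ :=
      tauApp_eq P G hpw E _ (by rw [trep_comp, hr])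
    simp only [types_comp_apply, TypeCat.ofHom_apply, h1, eval]
    rw [tauApp_eq P G hpw E x hr]
    simp [eval, FunctorToTypes.map_comp_apply]

include hpw in
theorem pw_isLeftKanExtension :
    G.IsLeftKanExtension (𝟙 (ObjectProperty.ι P ⋙ G)) := by
  constructor
  refine ⟨IsInitial.ofUniqueHom (fun E => StructuredArrow.homMk (tau P G hpw E) ?_) ?_⟩
  · ext A y
    have : tauApp P G hpw E (A.obj) y = eval P G E ⟨A.obj, A.property, 𝟙 _, y⟩ :=
      tauApp_eq P G hpw E _ (by simp [trep])
    show tauApp P G hpw E A.obj y = E.hom.app A y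
    rw [this]
    simp only [eval]
    rw [FunctorToTypes.map_id_apply]
  · intro E m
    apply StructuredArrow.hom_ext
    ext X x
    obtain ⟨r, hr⟩ : ∃ r : Tri P G X, trep r = x := ⟨_, (hpw X x).1.choose_spec⟩
    have hw := ConcreteCategory.congr_hom (NatTrans.congr_app (StructuredArrow.w m) ⟨r.A, r.hA⟩) r.y
    simp only [NatTrans.comp_app, NatTrans.id_app, Functor.whiskeringLeft_obj_obj,
      Functor.whiskeringLeft_obj_map, Functor.whiskerLeft_app, types_id_apply, types_comp_apply,
      Functor.LeftExtension.mk_hom] at hw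
    have hnat : m.right.app X (G.map r.φ r.y) = E.right.map r.φ (m.right.app r.A r.y) :=
      ConcreteCategory.congr_hom (m.right.naturality r.φ) r.y
    have hw' : m.right.app r.A r.y = E.hom.app ⟨r.A, r.hA⟩ r.y := hw
    show m.right.app X x = tauApp P G hpw E X x
    rw [tauApp_eq P G hpw E x hr, ← hr, eval]
    simp only [trep]
    rw [hnat, hw']

end

section
variable [Small.{v} (Subtype P)]

lemma small_tri (X : Kᵒᵖ) : Small.{v} (Tri P G X) := by
  apply small_of_surjective
    (f := fun z : Σ A : Subtype P, ((A.1 ⟶ X) × G.obj A.1) =>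
      (⟨z.1.1, z.1.2, z.2.1, z.2.2⟩ : Tri P G X))
  intro r
  exact ⟨⟨⟨r.A, r.hA⟩, r.φ, r.y⟩, rfl⟩

lemma small_quot_tri (X : Kᵒᵖ) : Small.{v} (Quot (tstep (P := P) (G := G) (X := X))) := by
  haveI := small_tri P G X
  exact small_of_surjective (f := Quot.mk _) (fun q => Quot.exists_rep q)

/-- Hand-rolled pointwise left Kan extension of the restriction of `G` to `P`. -/
noncomputable def HF : Kᵒᵖ ⥤ Type v where
  obj X := letI := small_quot_tri P G X; Shrink.{v} (Quot (tstep (P := P) (G := G) (X := X)))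
  map {X X'} ψ := ↾fun z =>
    letI := small_quot_tri P G X
    letI := small_quot_tri P G X'
    equivShrink _ (Quot.lift
      (fun r : Tri P G X => Quot.mk _ (⟨r.A, r.hA, r.φ ≫ ψ, r.y⟩ : Tri P G X'))
      (by
        intro r s h
        unfold tstep at h
        obtain ⟨u, hu, hy⟩ := h
        exact Quot.sound ⟨u, by rw [← Category.assoc, hu], hy⟩)
      ((equivShrink _).symm z))
  map_id X := by
    letI := small_quot_tri P G X
    refine ConcreteCategory.hom_ext _ _ fun z => ?_
    obtain ⟨q, rfl⟩ : ∃ q, equivShrink _ q = z := ⟨_, (equivShrink _).apply_symm_apply z⟩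
    simp only [TypeCat.ofHom_apply, Equiv.symm_apply_apply, types_id_apply]
    congr 1
    induction q using Quot.ind with
    | _ r => exact congrArg (Quot.mk _) (by rw [Category.comp_id])
  map_comp {X X' X''} ψ ψ' := by
    letI := small_quot_tri P G X
    letI := small_quot_tri P G X'
    letI := small_quot_tri P G X''
    refine ConcreteCategory.hom_ext _ _ fun z => ?_
    obtain ⟨q, rfl⟩ : ∃ q, equivShrink _ q = z := ⟨_, (equivShrink _).apply_symm_apply z⟩
    simp only [types_comp_apply, TypeCat.ofHom_apply, Equiv.symm_apply_apply]
    congr 1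
    induction q using Quot.ind with
    | _ r => exact congrArg (Quot.mk _) (by rw [Category.assoc])

end
end Bridge
section BridgeTwo

variable (P : Kᵒᵖ → Prop) (G : Kᵒᵖ ⥤ Type v) [Small.{v} (Subtype P)]

noncomputable def mkH {X : Kᵒᵖ} (r : Tri P G X) : (HF P G).obj X :=
  letI := small_quot_tri P G X
  equivShrink _ (Quot.mk _ r)

variable {P G}

lemma mkH_surj {X : Kᵒᵖ} (z : (HF P G).obj X) : ∃ r : Tri P G X, mkH P G r = z := by
  letI := small_quot_tri P G X
  obtain ⟨q, hq⟩ : ∃ q, equivShrink _ q = z := ⟨_, (equivShrink _).apply_symm_apply z⟩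
  obtain ⟨r, hr⟩ := Quot.exists_rep q
  exact ⟨r, by rw [mkH, hr, hq]⟩

lemma mkH_eq_iff {X : Kᵒᵖ} (r s : Tri P G X) :
    mkH P G r = mkH P G s ↔ Relation.EqvGen tstep r s := by
  letI := small_quot_tri P G X
  rw [mkH, mkH]
  constructor
  · intro h
    exact Quot.eq.mp ((equivShrink _).injective h)
  · intro h
    exact congrArg _ (Quot.eq.mpr h)

lemma mkH_map {X X' : Kᵒᵖ} (ψ : X ⟶ X') (r : Tri P G X) :
    (HF P G).map ψ (mkH P G r) = mkH P G ⟨r.A, r.hA, r.φ ≫ ψ, r.y⟩ := by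
  letI := small_quot_tri P G X
  letI := small_quot_tri P G X'
  show equivShrink _ (Quot.lift _ _ ((equivShrink _).symm (equivShrink _ (Quot.mk _ r)))) = _
  rw [Equiv.symm_apply_apply]
  rfl

variable (P G)

noncomputable def gam : ObjectProperty.ι P ⋙ G ⟶ ObjectProperty.ι P ⋙ HF P G where
  app A := ↾fun y => mkH P G ⟨A.obj, A.property, 𝟙 A.obj, y⟩
  naturality A B u := by
    refine ConcreteCategory.hom_ext _ _ fun y => ?_
    show mkH P G ⟨B.obj, B.property, 𝟙 B.obj, G.map u.hom y⟩ =
      (HF P G).map u.hom (mkH P G ⟨A.obj, A.property, 𝟙 A.obj, y⟩)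
    rw [mkH_map]
    rw [mkH_eq_iff]
    exact .symm _ _ (.rel _ _ ⟨u.hom, by simp, rfl⟩)

noncomputable def kap : HF P G ⟶ G where
  app X := ↾fun z =>
    letI := small_quot_tri P G X
    Quot.lift trep (fun _ _ h => tstep_trep h) ((equivShrink _).symm z)
  naturality X X' ψ := by
    letI := small_quot_tri P G X
    letI := small_quot_tri P G X'
    refine ConcreteCategory.hom_ext _ _ fun z => ?_
    obtain ⟨r, rfl⟩ := mkH_surj z
    simp only [types_comp_apply]
    rw [mkH_map]
    show Quot.lift _ _ ((equivShrink _).symm (equivShrink _ (Quot.mk _ _))) =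
      G.map ψ (Quot.lift _ _ ((equivShrink _).symm (equivShrink _ (Quot.mk _ r))))
    rw [Equiv.symm_apply_apply, Equiv.symm_apply_apply]
    show trep ⟨r.A, r.hA, r.φ ≫ ψ, r.y⟩ = G.map ψ (trep r)
    exact trep_comp ψ r

lemma kap_mkH {X : Kᵒᵖ} (r : Tri P G X) : (kap P G).app X (mkH P G r) = trep r := by
  letI := small_quot_tri P G X
  show Quot.lift _ _ ((equivShrink _).symm (equivShrink _ (Quot.mk _ r))) = _
  rw [Equiv.symm_apply_apply]

lemma eval_comp (E : Ext P G) {X X' : Kᵒᵖ} (ψ : X ⟶ X') (r : Tri P G X) :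
    eval P G E ⟨r.A, r.hA, r.φ ≫ ψ, r.y⟩ = E.right.map ψ (eval P G E r) := by
  simp [eval, FunctorToTypes.map_comp_apply]

noncomputable def hdesc (E : Ext P G) : HF P G ⟶ E.right where
  app X := ↾fun z =>
    letI := small_quot_tri P G X
    Quot.lift (eval P G E) (fun _ _ h => eval_tstep P G E h) ((equivShrink _).symm z)
  naturality X X' ψ := by
    letI := small_quot_tri P G X
    letI := small_quot_tri P G X'
    refine ConcreteCategory.hom_ext _ _ fun z => ?_
    obtain ⟨r, rfl⟩ := mkH_surj z
    simp only [types_comp_apply]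
    rw [mkH_map]
    show Quot.lift _ _ ((equivShrink _).symm (equivShrink _ (Quot.mk _ _))) =
      E.right.map ψ (Quot.lift _ _ ((equivShrink _).symm (equivShrink _ (Quot.mk _ r))))
    rw [Equiv.symm_apply_apply, Equiv.symm_apply_apply]
    show eval P G E ⟨r.A, r.hA, r.φ ≫ ψ, r.y⟩ = E.right.map ψ (eval P G E r)
    exact eval_comp P G E ψ r

lemma hdesc_mkH (E : Ext P G) {X : Kᵒᵖ} (r : Tri P G X) :
    (hdesc P G E).app X (mkH P G r) = eval P G E r := by
  letI := small_quot_tri P G X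
  show Quot.lift _ _ ((equivShrink _).symm (equivShrink _ (Quot.mk _ r))) = _
  rw [Equiv.symm_apply_apply]

noncomputable def hfIsInitial :
    IsInitial (Functor.LeftExtension.mk (HF P G) (gam P G)) := by
  refine IsInitial.ofUniqueHom (fun E => StructuredArrow.homMk (hdesc P G E) ?_) ?_
  · ext A y
    simp only [NatTrans.comp_app, Functor.whiskeringLeft_obj_obj, Functor.whiskeringLeft_obj_map,
      Functor.whiskerLeft_app, Functor.LeftExtension.mk_hom, types_comp_apply]
    show (hdesc P G E).app A.obj ((gam P G).app A y) = E.hom.app A y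
    rw [show (gam P G).app A y = mkH P G ⟨A.obj, A.property, 𝟙 A.obj, y⟩ from rfl]
    rw [hdesc_mkH]
    simp only [eval]
    rw [FunctorToTypes.map_id_apply]
  · intro E m
    apply StructuredArrow.hom_ext
    ext X z
    obtain ⟨r, rfl⟩ := mkH_surj z
    have hw := ConcreteCategory.congr_hom (NatTrans.congr_app (StructuredArrow.w m) ⟨r.A, r.hA⟩) r.y
    simp only [NatTrans.comp_app, Functor.whiskeringLeft_obj_obj, Functor.whiskeringLeft_obj_map,
      Functor.whiskerLeft_app, Functor.LeftExtension.mk_hom, types_comp_apply] at hw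
    have hw' : m.right.app r.A ((gam P G).app ⟨r.A, r.hA⟩ r.y) =
        E.hom.app ⟨r.A, r.hA⟩ r.y := hw
    have hmk : mkH P G r = (HF P G).map r.φ ((gam P G).app ⟨r.A, r.hA⟩ r.y) := by
      show _ = (HF P G).map r.φ (mkH P G ⟨r.A, r.hA, 𝟙 r.A, r.y⟩)
      rw [mkH_map]
      simp
    have hnat : m.right.app X ((HF P G).map r.φ ((gam P G).app ⟨r.A, r.hA⟩ r.y)) =
        E.right.map r.φ (m.right.app r.A ((gam P G).app ⟨r.A, r.hA⟩ r.y)) :=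
      ConcreteCategory.congr_hom (m.right.naturality r.φ)
      ((gam P G).app ⟨r.A, r.hA⟩ r.y)
    show m.right.app X (mkH P G r) = (hdesc P G E).app X (mkH P G r)
    rw [hdesc_mkH, hmk, hnat, hw']
    rfl

theorem isLeftKanExtension_pw
    [inst : G.IsLeftKanExtension (𝟙 (ObjectProperty.ι P ⋙ G))] : PW P G := by
  obtain ⟨h0⟩ := inst.nonempty_isUniversal
  have hH := hfIsInitial P G
  set EH : Ext P G := Functor.LeftExtension.mk (HF P G) (gam P G) with hEH
  let mτ := h0.to EH
  let τ : G ⟶ HF P G := mτ.right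
  have hτw : ∀ (A : ObjectProperty.FullSubcategory P) (y : G.obj A.obj),
      τ.app A.obj y = (gam P G).app A y := by
    intro A y
    have := ConcreteCategory.congr_hom (NatTrans.congr_app (StructuredArrow.w mτ) A) y
    exact this
  have hκτnat : τ ≫ kap P G = 𝟙 G := by
    refine StructuredArrow.IsUniversal.hom_ext h0 ?_
    ext A y
    simp only [NatTrans.comp_app, NatTrans.id_app, Functor.whiskeringLeft_obj_obj,
      Functor.whiskeringLeft_obj_map, Functor.whiskerLeft_app, types_id_apply, types_comp_apply,
      Functor.LeftExtension.mk_hom]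
    show (kap P G).app A.obj (τ.app A.obj y) = y
    rw [hτw]
    rw [show (gam P G).app A y = mkH P G ⟨A.obj, A.property, 𝟙 A.obj, y⟩ from rfl, kap_mkH]
    simp [trep]
  have hτκnat : kap P G ≫ τ = 𝟙 (HF P G) := by
    refine StructuredArrow.IsUniversal.hom_ext hH ?_
    ext A y
    simp only [NatTrans.comp_app, NatTrans.id_app, Functor.whiskeringLeft_obj_obj,
      Functor.whiskeringLeft_obj_map, Functor.whiskerLeft_app, types_id_apply, types_comp_apply,
      Functor.LeftExtension.mk_hom]
    show τ.app A.obj ((kap P G).app A.obj ((gam P G).app A y)) = (gam P G).app A y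
    have hgam : (gam P G).app A y = mkH P G ⟨A.obj, A.property, 𝟙 A.obj, y⟩ := rfl
    rw [hgam, kap_mkH]
    rw [show trep (⟨A.obj, A.property, 𝟙 A.obj, y⟩ : Tri P G A.obj) = y by simp [trep]]
    rw [hτw]
    exact hgam
  have hretr : ∀ (X : Kᵒᵖ) (x : G.obj X), (kap P G).app X (τ.app X x) = x := by
    intro X x
    have := ConcreteCategory.congr_hom (NatTrans.congr_app hκτnat X) x
    simpa using this
  have hsplit : ∀ (X : Kᵒᵖ) (z : (HF P G).obj X), τ.app X ((kap P G).app X z) = z := by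
    intro X z
    have := ConcreteCategory.congr_hom (NatTrans.congr_app hτκnat X) z
    simpa using this
  intro X x
  have hτmk : ∀ r : Tri P G X, trep r = x → mkH P G r = τ.app X x := by
    intro r hr
    have h1 : τ.app X (trep r) = τ.app X ((kap P G).app X (mkH P G r)) := by
      rw [kap_mkH]
    rw [hsplit] at h1
    rw [← h1, hr]
  constructor
  · obtain ⟨r, hr⟩ := mkH_surj (τ.app X x)
    refine ⟨r, ?_⟩
    have h2 : (kap P G).app X (mkH P G r) = trep r := kap_mkH P G r
    rw [hr, hretr] at h2
    exact h2.symm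
  · intro r r' hr hr'
    rw [← mkH_eq_iff]
    rw [hτmk r hr, hτmk r' hr']

end BridgeTwo
theorem isSmall_iff_pw (G : Kᵒᵖ ⥤ Type v) :
    IsSmallFunctor.{v} G ↔ ∃ P : Kᵒᵖ → Prop, Small.{v} (Subtype P) ∧ PW P G := by
  constructor
  · rintro ⟨P, hs, hlke⟩
    refine ⟨P, hs, ?_⟩
    haveI := hs
    haveI := hlke
    exact isLeftKanExtension_pw P G
  · rintro ⟨P, hs, hpw⟩
    exact ⟨P, hs, pw_isLeftKanExtension P G hpw⟩


section PartI

variable (D : Cat.{v, v}) (S : ↑D ⥤ K)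

section
variable [HasLimitsOfSize.{v, v} (SmallPresheaf K)]

noncomputable abbrev Lrep : SmallPresheaf K := limit (S ⋙ smallYoneda K)

noncomputable def legsL (X : Kᵒᵖ) (z : (Lrep D S).1.obj X) (d : ↑D) :
    X.unop ⟶ S.obj d :=
  (limit.π (S ⋙ smallYoneda K) d).hom.app X z

lemma legsL_w (X : Kᵒᵖ) (z : (Lrep D S).1.obj X) {d d' : ↑D} (δ : d ⟶ d') :
    ((S ⋙ yoneda).flip.obj X).map δ (legsL D S X z d) = legsL D S X z d' := by
  have := ConcreteCategory.congr_hom (NatTrans.congr_app (congrArg InducedCategory.Hom.hom (limit.w (S ⋙ smallYoneda K) δ)) X) z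
  exact this

noncomputable def θrep (X : Kᵒᵖ) (z : (Lrep D S).1.obj X) :
    ((S ⋙ yoneda).flip ⋙ lim).obj X :=
  Types.Limit.mk _ (legsL D S X z) (fun d d' δ => legsL_w D S X z δ)

lemma θrep_π (X : Kᵒᵖ) (z : (Lrep D S).1.obj X) (d : ↑D) :
    limit.π ((S ⋙ yoneda).flip.obj X) d (θrep D S X z) = legsL D S X z d := by
  rw [θrep, Types.Limit.π_mk]

lemma legsL_natural (X : Kᵒᵖ) (z : (Lrep D S).1.obj X) {Y : K} (f : Y ⟶ X.unop) (d : ↑D) :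
    legsL D S (op Y) ((Lrep D S).1.map f.op z) d = f ≫ legsL D S X z d := by
  have := ConcreteCategory.congr_hom ((limit.π (S ⋙ smallYoneda K) d).hom.naturality f.op) z
  exact this

lemma θrep_bijective (X : Kᵒᵖ) : Function.Bijective (θrep D S X) := by
  constructor
  · intro z z' h
    have hl : ∀ d, legsL D S X z d = legsL D S X z' d := by
      intro d
      rw [← θrep_π, ← θrep_π, h]
    let mz : (smallYoneda K).obj X.unop ⟶ Lrep D S := ObjectProperty.homMk (yonedaEquiv.symm z)
    let mz' : (smallYoneda K).obj X.unop ⟶ Lrep D S := ObjectProperty.homMk (yonedaEquiv.symm z')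
    have h1 : ∀ d : ↑D,
        mz ≫ limit.π (S ⋙ smallYoneda K) d = mz' ≫ limit.π (S ⋙ smallYoneda K) d := by
      intro d
      apply ObjectProperty.hom_ext
      show (yonedaEquiv.symm z : yoneda.obj X.unop ⟶ (Lrep D S).1) ≫
          (limit.π (S ⋙ smallYoneda K) d).hom =
        (yonedaEquiv.symm z' : yoneda.obj X.unop ⟶ (Lrep D S).1) ≫
          (limit.π (S ⋙ smallYoneda K) d).hom
      ext Y f
      simp only [NatTrans.comp_app, types_comp_apply, TypeCat.Fun.toFun_apply,
        yonedaEquiv_symm_app_apply, yoneda_obj_obj]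
      have hz := legsL_natural D S X z f d
      have hz' := legsL_natural D S X z' f d
      simp only [legsL] at hz hz'
      erw [hz, hz']
      have hl' := hl d
      simp only [legsL] at hl'
      rw [hl']
    have h2 := limit.hom_ext (F := S ⋙ smallYoneda K) h1
    have h3 : yonedaEquiv.symm z = yonedaEquiv.symm z' := congrArg (fun f => f.hom) h2
    have h4 := congrArg yonedaEquiv h3
    simpa using h4
  · intro s
    set sd : ∀ d : ↑D, X.unop ⟶ S.obj d := fun d => limit.π ((S ⋙ yoneda).flip.obj X) d s
      with hsd
    have hw : ∀ {d d' : ↑D} (δ : d ⟶ d'), sd d ≫ S.map δ = sd d' := by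
      intro d d' δ
      have := ConcreteCategory.congr_hom (limit.w ((S ⋙ yoneda).flip.obj X) δ) s
      exact this
    let C : Cone (S ⋙ smallYoneda K) :=
      { pt := (smallYoneda K).obj X.unop
        π :=
          { app := fun d => ObjectProperty.homMk (yoneda.map (sd d) : yoneda.obj X.unop ⟶
              yoneda.obj (S.obj d))
            naturality := fun d d' δ => by
              apply ObjectProperty.hom_ext
              show 𝟙 _ ≫ _ = _
              rw [Category.id_comp]
              show yoneda.map (sd d') = yoneda.map (sd d) ≫ yoneda.map (S.map δ)
              rw [← Functor.map_comp, hw δ] } }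
    set m : (smallYoneda K).obj X.unop ⟶ Lrep D S := limit.lift (S ⋙ smallYoneda K) C with hm
    refine ⟨yonedaEquiv m.hom, ?_⟩
    apply Types.limit_ext
    intro d
    rw [θrep_π]
    show (limit.π (S ⋙ smallYoneda K) d).hom.app X
      (yonedaEquiv m.hom) = sd d
    have key : (limit.π (S ⋙ smallYoneda K) d).hom.app X
        (m.hom.app (op X.unop) (𝟙 X.unop)) = sd d := by
      have happ := ConcreteCategory.congr_hom (NatTrans.congr_app (congrArg InducedCategory.Hom.hom
        (limit.lift_π C d)) (op X.unop)) (𝟙 X.unop)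
      refine Eq.trans ?_ (happ.trans ?_)
      · rfl
      · show (yoneda.map (sd d)).app (op X.unop) (𝟙 X.unop) = sd d
        simp
    exact key

noncomputable def isoRep : (Lrep D S).1 ≅ (S ⋙ yoneda).flip ⋙ lim := by
  refine NatIso.ofComponents (fun X => (Equiv.ofBijective _ (θrep_bijective D S X)).toIso) ?_
  intro X X' ψ
  refine ConcreteCategory.hom_ext _ _ fun z => ?_
  show θrep D S X' ((Lrep D S).1.map ψ z) = ((S ⋙ yoneda).flip ⋙ lim).map ψ (θrep D S X z)
  apply Types.limit_ext
  intro d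
  rw [θrep_π]
  have hR : limit.π ((S ⋙ yoneda).flip.obj X') d
        (((S ⋙ yoneda).flip ⋙ lim).map ψ (θrep D S X z)) =
      ((S ⋙ yoneda).flip.map ψ).app d (limit.π ((S ⋙ yoneda).flip.obj X) d (θrep D S X z)) :=
    ConcreteCategory.congr_hom (limMap_π ((S ⋙ yoneda).flip.map ψ) d) (θrep D S X z)
  rw [hR, θrep_π]
  exact legsL_natural D S X z ψ.unop d

theorem partI : IsSmallFunctor.{v} ((S ⋙ yoneda).flip ⋙ lim) := by
  rw [isSmall_iff_pw]
  obtain ⟨P, hs, hpw⟩ := (isSmall_iff_pw (Lrep D S).1).mp (Lrep D S).2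
  exact ⟨P, hs, pw_iso (isoRep D S) hpw⟩

end
end PartI
section PartII

lemma eqvgen_chain {α : Type*} {r : α → α → Prop} (hrefl : ∀ a, r a a) {a b : α}
    (h : Relation.EqvGen r a b) :
    ∃ (n : ℕ) (c : ℕ → α), c 0 = a ∧ (∀ i, n ≤ i → c i = b) ∧
      ∀ i, r (c i) (c (i + 1)) ∨ r (c (i + 1)) (c i) := by
  induction h with
  | rel x y hxy =>
    refine ⟨1, fun i => if i = 0 then x else y, by simp, ?_, ?_⟩
    · intro i hi
      have h1 : i ≠ 0 := by omega
      simp [h1]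
    · intro i
      show r (if i = 0 then x else y) (if i + 1 = 0 then x else y) ∨
        r (if i + 1 = 0 then x else y) (if i = 0 then x else y)
      rcases Nat.eq_zero_or_pos i with h | h
      · subst h
        simpa using Or.inl hxy
      · have h1 : i ≠ 0 := by omega
        have h2 : i + 1 ≠ 0 := by omega
        simp only [h1, h2, ite_false]
        exact Or.inl (hrefl y)
  | refl x => exact ⟨0, fun _ => x, rfl, fun _ _ => rfl, fun i => Or.inl (hrefl x)⟩
  | symm x y _ ih =>
    obtain ⟨n, c, h0, hn, hadj⟩ := ih
    refine ⟨n, fun i => c (n - i), ?_, ?_, ?_⟩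
    · show c (n - 0) = y
      rw [Nat.sub_zero]
      exact hn n le_rfl
    · intro i hi
      show c (n - i) = x
      rw [Nat.sub_eq_zero_of_le hi, h0]
    · intro i
      show r (c (n - i)) (c (n - (i + 1))) ∨ r (c (n - (i + 1))) (c (n - i))
      rcases le_or_gt n i with hle | hlt
      · rw [Nat.sub_eq_zero_of_le hle, Nat.sub_eq_zero_of_le (by omega)]
        exact Or.inl (hrefl _)
      · have h2 : n - i = (n - (i + 1)) + 1 := by omega
        rw [h2]
        exact (hadj (n - (i + 1))).symm
  | trans x y z _ _ ih1 ih2 =>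
    obtain ⟨n1, c1, h10, h1n, hadj1⟩ := ih1
    obtain ⟨n2, c2, h20, h2n, hadj2⟩ := ih2
    refine ⟨n1 + n2, fun i => if i < n1 then c1 i else c2 (i - n1), ?_, ?_, ?_⟩
    · show (if 0 < n1 then c1 0 else c2 (0 - n1)) = x
      rcases Nat.eq_zero_or_pos n1 with h | h
      · rw [if_neg (by omega)]
        rw [Nat.zero_sub, h20, ← h1n 0 (by omega), h10]
      · rw [if_pos h, h10]
    · intro i hi
      show (if i < n1 then c1 i else c2 (i - n1)) = z
      rw [if_neg (by omega)]
      exact h2n _ (by omega)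
    · intro i
      show r (if i < n1 then c1 i else c2 (i - n1))
          (if i + 1 < n1 then c1 (i + 1) else c2 (i + 1 - n1)) ∨
        r (if i + 1 < n1 then c1 (i + 1) else c2 (i + 1 - n1))
          (if i < n1 then c1 i else c2 (i - n1))
      rcases lt_trichotomy (i + 1) n1 with h | h | h
      · rw [if_pos (by omega), if_pos h]
        exact hadj1 i
      · rw [if_pos (by omega), if_neg (by omega)]
        have he : c2 (i + 1 - n1) = c1 (i + 1) := by
          rw [show i + 1 - n1 = 0 by omega, h20, ← h1n (i + 1) (by omega)]
        rw [he]
        exact hadj1 i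
      · rcases le_or_gt n1 i with hle | hlt
        · rw [if_neg (by omega), if_neg (by omega),
            show i + 1 - n1 = (i - n1) + 1 by omega]
          exact hadj2 _
        · omega

variable {J : Type v} [Category.{v} J] (F : J ⥤ (Kᵒᵖ ⥤ Type v))

section PtAPI
variable {t : Cone F} (ht : IsLimit t)

noncomputable def eqSec (X : Kᵒᵖ) :
    t.pt.obj X ≃ (F ⋙ (evaluation Kᵒᵖ (Type v)).obj X).sections :=
  Types.isLimitEquivSections (isLimitOfPreserves ((evaluation Kᵒᵖ (Type v)).obj X) ht)

def lg (X : Kᵒᵖ) (z : t.pt.obj X) (j : J) : (F.obj j).obj X := (t.π.app j).app X z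

include ht in
lemma lg_ext {X : Kᵒᵖ} {z z' : t.pt.obj X} (h : ∀ j, lg F X z j = lg F X z' j) : z = z' := by
  apply (eqSec F ht X).injective
  exact Subtype.ext (funext h)

lemma lg_sections {X : Kᵒᵖ} (z : t.pt.obj X) {j j' : J} (δ : j ⟶ j') :
    (F.map δ).app X (lg F X z j) = lg F X z j' := by
  have := ConcreteCategory.congr_hom (congr_fun (congrArg NatTrans.app (t.w δ)) X) z
  exact this

lemma lg_map {X X' : Kᵒᵖ} (ψ : X ⟶ X') (z : t.pt.obj X) (j : J) :
    lg F X' (t.pt.map ψ z) j = (F.obj j).map ψ (lg F X z j) := by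
  have := ConcreteCategory.congr_hom ((t.π.app j).naturality ψ) z
  exact this

noncomputable def mkpt (X : Kᵒᵖ) (s : ∀ j, (F.obj j).obj X)
    (hs : ∀ {j j' : J} (δ : j ⟶ j'), (F.map δ).app X (s j) = s j') : t.pt.obj X :=
  (eqSec F ht X).symm ⟨s, fun {j j'} δ => hs δ⟩

lemma lg_mkpt (X : Kᵒᵖ) (s : ∀ j, (F.obj j).obj X) (hs) (j : J) :
    lg F X (mkpt F ht X s hs) j = s j :=
  Types.isLimitEquivSections_symm_apply
    (isLimitOfPreserves ((evaluation Kᵒᵖ (Type v)).obj X) ht) ⟨s, fun {j j'} δ => hs δ⟩ j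

end PtAPI

/-- Vertex alphabet for pattern diagrams. -/
inductive V₀ : Type v where
  | pr : J → V₀
  | ch : (Σ j j' : J, j ⟶ j') → ℕ → V₀
  | lft : V₀ → V₀
  | rgt : V₀ → V₀
  | crs : J → ℕ → V₀

variable (Acl : Kᵒᵖ → Prop)

/-- A pattern: a small labelled diagram in `K` together with primary vertices and
elements presenting sections. -/
structure Pat where
  a : V₀ (J := J) → Subtype Acl
  Ed : Set (Σ v w : V₀ (J := J), ((a v).1.unop ⟶ (a w).1.unop))
  p : J → V₀ (J := J)
  ξ : ∀ j, (F.obj j).obj (a (p j)).1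

instance pat_small [Small.{v} (Subtype Acl)] : Small.{v} (Pat F Acl) := by
  apply small_of_injective (f := fun π : Pat F Acl =>
    (⟨π.a, π.p, π.Ed, π.ξ⟩ : Σ (a : V₀ (J := J) → Subtype Acl) (p : J → V₀ (J := J)),
      (Set (Σ v w : V₀ (J := J), ((a v).1.unop ⟶ (a w).1.unop))) ×
        (∀ j, (F.obj j).obj (a (p j)).1)))
  exact Function.LeftInverse.injective
    (g := fun x => ⟨x.1, x.2.2.1, x.2.1, x.2.2.2⟩) (fun π => rfl)

section PatDiagram

variable {F} {Acl : Kᵒᵖ → Prop} (π : Pat F Acl)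

/-- Vertices of the diagram associated with a pattern (wrapper to carry the quiver). -/
structure PQ (_ : Pat F Acl) : Type v where
  v : V₀ (J := J)

instance : Quiver (PQ π) :=
  ⟨fun x y => {u : (π.a x.v).1.unop ⟶ (π.a y.v).1.unop //
    (⟨x.v, y.v, u⟩ : Σ v w : V₀ (J := J), ((π.a v).1.unop ⟶ (π.a w).1.unop)) ∈ π.Ed}⟩

abbrev SP : Paths (PQ π) ⥤ K :=
  Paths.lift { obj := fun x => (π.a x.v).1.unop, map := fun e => e.1 }

def pv (v : V₀ (J := J)) : Paths (PQ π) := (⟨v⟩ : PQ π)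

noncomputable def NP : Kᵒᵖ ⥤ Type v := (SP π ⋙ yoneda).flip ⋙ lim

def IsCF (X : Kᵒᵖ) (s : ∀ v : V₀ (J := J), X.unop ⟶ (π.a v).1.unop) : Prop :=
  ∀ e ∈ π.Ed, s e.1 ≫ e.2.2 = s e.2.1

noncomputable def nlg (X : Kᵒᵖ) (z : (NP π).obj X) (v : V₀ (J := J)) :
    X.unop ⟶ (π.a v).1.unop :=
  limit.π ((SP π ⋙ yoneda).flip.obj X) (pv π v) z

lemma cf_path {X : Kᵒᵖ} {s : ∀ v : V₀ (J := J), X.unop ⟶ (π.a v).1.unop}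
    (hs : IsCF π X s) : ∀ {x y : Paths (PQ π)} (ρ : x ⟶ y),
    s x.v ≫ (SP π).map ρ = s y.v := by
  refine Paths.induction (V := PQ π)
    (P := fun {x y} (ρ : x ⟶ y) => s x.v ≫ (SP π).map ρ = s y.v) ?_ ?_
  · intro x
    rw [CategoryTheory.Functor.map_id]
    exact Category.comp_id _
  · intro x y w p q ih
    erw [CategoryTheory.Functor.map_comp, ← Category.assoc, ih]
    have hq : (SP π).map ((Paths.of (PQ π)).map q) = q.1 :=
      Paths.lift_toPath ({ obj := fun x : PQ π => (π.a x.v).1.unop, map := fun e => e.1 } :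
        PQ π ⥤q K) q
    rw [hq]
    exact hs _ q.2

lemma nlg_cf (X : Kᵒᵖ) (z : (NP π).obj X) : IsCF π X (nlg π X z) := by
  rintro ⟨v, w, u⟩ he
  let ε : pv π v ⟶ pv π w :=
    Quiver.Hom.toPath (⟨u, he⟩ : (⟨v⟩ : PQ π) ⟶ (⟨w⟩ : PQ π))
  have h1 := ConcreteCategory.congr_hom (limit.w ((SP π ⋙ yoneda).flip.obj X) ε) z
  have hmap : ((SP π ⋙ yoneda).flip.obj X).map ε (nlg π X z v) =
      nlg π X z v ≫ (SP π).map ε := rfl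
  have hlift : (SP π).map ε = u :=
    Paths.lift_toPath ({ obj := fun x : PQ π => (π.a x.v).1.unop, map := fun e => e.1 } :
      PQ π ⥤q K) (⟨u, he⟩ : (⟨v⟩ : PQ π) ⟶ (⟨w⟩ : PQ π))
  show nlg π X z v ≫ u = nlg π X z w
  erw [← hlift, ← hmap]
  exact h1

noncomputable def mkN {X : Kᵒᵖ} (s : ∀ v : V₀ (J := J), X.unop ⟶ (π.a v).1.unop)
    (hs : IsCF π X s) : (NP π).obj X :=
  Types.Limit.mk ((SP π ⋙ yoneda).flip.obj X) (fun x => s x.v)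
    (fun x y ρ => by
      show s x.v ≫ (SP π).map ρ = s y.v
      exact cf_path π hs ρ)

lemma nlg_mkN {X : Kᵒᵖ} (s) (hs : IsCF π X s) (v : V₀ (J := J)) :
    nlg π X (mkN π s hs) v = s v := by
  show limit.π ((SP π ⋙ yoneda).flip.obj X) _ _ = _
  erw [mkN, Types.Limit.π_mk]
  rfl

lemma n_ext {X : Kᵒᵖ} {z z' : (NP π).obj X} (h : ∀ v : V₀ (J := J), nlg π X z v = nlg π X z' v) :
    z = z' :=
  Types.limit_ext _ _ _ (fun x => h x.v)

lemma nlg_map {X X' : Kᵒᵖ} (ψ : X ⟶ X') (z : (NP π).obj X) (v : V₀ (J := J)) :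
    nlg π X' ((NP π).map ψ z) v = ψ.unop ≫ nlg π X z v := by
  have := ConcreteCategory.congr_hom (limMap_π ((SP π ⋙ yoneda).flip.map ψ) (pv π v)) z
  exact this

/-- Validity: any cone over the pattern diagram induces a compatible family. -/
def Valid : Prop :=
  ∀ (X : Kᵒᵖ) (s : ∀ v : V₀ (J := J), X.unop ⟶ (π.a v).1.unop), IsCF π X s →
    ∀ {j j' : J} (δ : j ⟶ j'),
      (F.map δ).app X ((F.obj j).map (s (π.p j)).op (π.ξ j)) =
        (F.obj j').map (s (π.p j')).op (π.ξ j')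

variable {t : Cone F} (ht : IsLimit t)

noncomputable def xval (hv : Valid π) (X : Kᵒᵖ) (z : (NP π).obj X) : t.pt.obj X :=
  mkpt F ht X (fun j => (F.obj j).map (nlg π X z (π.p j)).op (π.ξ j))
    (fun {j j'} δ => hv X (nlg π X z) (nlg_cf π X z) δ)

lemma lg_xval (hv : Valid π) (X : Kᵒᵖ) (z : (NP π).obj X) (j : J) :
    lg F X (xval π ht hv X z) j = (F.obj j).map (nlg π X z (π.p j)).op (π.ξ j) :=
  lg_mkpt F ht X _ _ j

lemma xval_map (hv : Valid π) {X X' : Kᵒᵖ} (ψ : X ⟶ X') (z : (NP π).obj X) :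
    xval π ht hv X' ((NP π).map ψ z) = t.pt.map ψ (xval π ht hv X z) := by
  apply lg_ext F ht
  intro j
  rw [lg_xval, lg_map, lg_xval, nlg_map]
  rw [show (ψ.unop ≫ nlg π X z (π.p j)).op = (nlg π X z (π.p j)).op ≫ ψ from rfl]
  rw [FunctorToTypes.map_comp_apply]

end PatDiagram
section Casts

variable {P : Kᵒᵖ → Prop} {G : Kᵒᵖ ⥤ Type v}

lemma tri_phi_cast {X : Kᵒᵖ} {r q : Tri P G X} (h : r = q) (hA : r.A.unop = q.A.unop) :
    r.φ.unop ≫ eqToHom hA = q.φ.unop := by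
  subst h
  simp

lemma tri_y_cast {X : Kᵒᵖ} {r q : Tri P G X} (h : r = q) (hA : r.A.unop = q.A.unop) :
    G.map (Quiver.Hom.op (eqToHom hA)) q.y = r.y := by
  subst h
  simp [eqToHom_refl]

/-- Transport of values along one leg-compatible step. -/
lemma step_val {X' : Kᵒᵖ} {A B : Kᵒᵖ} (u : A ⟶ B) {yA : G.obj A} {yB : G.obj B}
    (hy : G.map u yA = yB) {sA : X'.unop ⟶ A.unop} {sB : X'.unop ⟶ B.unop}
    (hleg : sB ≫ u.unop = sA) :
    G.map sB.op yB = G.map sA.op yA := by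
  rw [← hy, ← hleg]
  rw [show (sB ≫ u.unop).op = u ≫ sB.op from rfl]
  rw [FunctorToTypes.map_comp_apply]

end Casts

section ClaimB

variable {F}

lemma claimB {t : Cone F} (ht : IsLimit t) (Acl : Kᵒᵖ → Prop)
    (hPWA : ∀ j, PW Acl (F.obj j)) (X : Kᵒᵖ) (x : t.pt.obj X) :
    ∃ (π : Pat F Acl) (hv : Valid π) (z : (NP π).obj X),
      xval π ht hv X z = x := by
  classical
  have htj0 : ∀ j : J, ∃ r : Tri Acl (F.obj j) X, trep r = lg F X x j :=
    fun j => (hPWA j X (lg F X x j)).1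
  choose tj htj using htj0
  let AA := Σ j j' : J, j ⟶ j'
  let push : ∀ d : AA, Tri Acl (F.obj d.2.1) X := fun d =>
    ⟨(tj d.1).A, (tj d.1).hA, (tj d.1).φ, (F.map d.2.2).app (tj d.1).A (tj d.1).y⟩
  have hpush : ∀ d : AA, trep (push d) = lg F X x d.2.1 := by
    intro d
    show (F.obj d.2.1).map (tj d.1).φ ((F.map d.2.2).app (tj d.1).A (tj d.1).y) = _
    have hnat := ConcreteCategory.congr_hom ((F.map d.2.2).naturality (tj d.1).φ) (tj d.1).y
    rw [show (F.obj d.2.1).map (tj d.1).φ ((F.map d.2.2).app (tj d.1).A (tj d.1).y) =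
      (F.map d.2.2).app X ((F.obj d.1).map (tj d.1).φ (tj d.1).y) from hnat.symm]
    rw [show (F.obj d.1).map (tj d.1).φ (tj d.1).y = lg F X x d.1 from htj d.1]
    exact lg_sections F x d.2.2
  have hchain : ∀ d : AA, ∃ (n : ℕ) (c : ℕ → Tri Acl (F.obj d.2.1) X),
      c 0 = push d ∧ (∀ i, n ≤ i → c i = tj d.2.1) ∧
      ∀ i, tstep (c i) (c (i + 1)) ∨ tstep (c (i + 1)) (c i) := by
    intro d
    exact eqvgen_chain (fun r => tstep_refl r)
      ((hPWA d.2.1 X (lg F X x d.2.1)).2 (push d) (tj d.2.1) (hpush d) (htj d.2.1))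
  choose n c hc0 hcn hadj using hchain
  let a : V₀ (J := J) → Subtype Acl := fun v =>
    V₀.rec (fun j => ⟨(tj j).A, (tj j).hA⟩) (fun d i => ⟨(c d i).A, (c d i).hA⟩)
      (fun _ ih => ih) (fun _ ih => ih) (fun j _ => ⟨(tj j).A, (tj j).hA⟩) v
  have hbrA0 : ∀ d : AA, (tj d.1).A.unop = (c d 0).A.unop := by
    intro d
    rw [hc0 d]
  have hbrA1 : ∀ d : AA, (tj d.2.1).A.unop = (c d (n d)).A.unop := by
    intro d
    rw [hcn d (n d) le_rfl]
  let Ed : Set (Σ v w : V₀ (J := J), ((a v).1.unop ⟶ (a w).1.unop)) := fun e =>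
    (∃ (d : AA) (i : ℕ),
      (∃ (u : (c d i).A ⟶ (c d (i + 1)).A), u ≫ (c d (i + 1)).φ = (c d i).φ ∧
        (F.obj d.2.1).map u (c d i).y = (c d (i + 1)).y ∧
        e = ⟨V₀.ch d (i + 1), V₀.ch d i, u.unop⟩) ∨
      (∃ (u : (c d (i + 1)).A ⟶ (c d i).A), u ≫ (c d i).φ = (c d (i + 1)).φ ∧
        (F.obj d.2.1).map u (c d (i + 1)).y = (c d i).y ∧
        e = ⟨V₀.ch d i, V₀.ch d (i + 1), u.unop⟩)) ∨
    (∃ d : AA, e = ⟨V₀.pr d.1, V₀.ch d 0, eqToHom (hbrA0 d)⟩) ∨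
    (∃ d : AA, e = ⟨V₀.pr d.2.1, V₀.ch d (n d), eqToHom (hbrA1 d)⟩)
  let π : Pat F Acl := ⟨a, Ed, V₀.pr, fun j => (tj j).y⟩
  have hv : Valid π := by
    intro X' s hs j j' δ
    have hval : ∀ i : ℕ, (F.obj j').map (s (V₀.ch ⟨j, j', δ⟩ i)).op (c ⟨j, j', δ⟩ i).y =
        (F.obj j').map (s (V₀.ch ⟨j, j', δ⟩ 0)).op (c ⟨j, j', δ⟩ 0).y := by
      intro i
      induction i with
      | zero => rfl
      | succ i ih =>
        rcases hadj ⟨j, j', δ⟩ i with ⟨u, hu, hy⟩ | ⟨u, hu, hy⟩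
        · have hedge := hs ⟨V₀.ch ⟨j, j', δ⟩ (i + 1), V₀.ch ⟨j, j', δ⟩ i, u.unop⟩
            (Or.inl ⟨⟨j, j', δ⟩, i, Or.inl ⟨u, hu, hy, rfl⟩⟩)
          rw [← ih]
          exact step_val u hy hedge
        · have hedge := hs ⟨V₀.ch ⟨j, j', δ⟩ i, V₀.ch ⟨j, j', δ⟩ (i + 1), u.unop⟩
            (Or.inl ⟨⟨j, j', δ⟩, i, Or.inr ⟨u, hu, hy, rfl⟩⟩)
          rw [← ih]
          exact (step_val u hy hedge).symm
    have hbr0 := hs ⟨V₀.pr j, V₀.ch ⟨j, j', δ⟩ 0, eqToHom (hbrA0 ⟨j, j', δ⟩)⟩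
      (Or.inr (Or.inl ⟨⟨j, j', δ⟩, rfl⟩))
    have hbr1 := hs ⟨V₀.pr j', V₀.ch ⟨j, j', δ⟩ (n ⟨j, j', δ⟩), eqToHom (hbrA1 ⟨j, j', δ⟩)⟩
      (Or.inr (Or.inr ⟨⟨j, j', δ⟩, rfl⟩))
    have h0 : (F.obj j').map (s (V₀.ch ⟨j, j', δ⟩ 0)).op (c ⟨j, j', δ⟩ 0).y =
        (F.obj j').map (s (V₀.pr j)).op (push ⟨j, j', δ⟩).y := by
      rw [← hbr0]
      rw [show ((s (V₀.pr j) ≫ eqToHom (hbrA0 ⟨j, j', δ⟩))).op =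
        Quiver.Hom.op (eqToHom (hbrA0 ⟨j, j', δ⟩)) ≫ (s (V₀.pr j)).op from rfl]
      rw [FunctorToTypes.map_comp_apply]
      rw [tri_y_cast (hc0 ⟨j, j', δ⟩).symm (hbrA0 ⟨j, j', δ⟩)]
    have h1 : (F.obj j').map (s (V₀.ch ⟨j, j', δ⟩ (n ⟨j, j', δ⟩))).op
          (c ⟨j, j', δ⟩ (n ⟨j, j', δ⟩)).y =
        (F.obj j').map (s (V₀.pr j')).op (tj j').y := by
      rw [← hbr1]
      rw [show ((s (V₀.pr j') ≫ eqToHom (hbrA1 ⟨j, j', δ⟩))).op =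
        Quiver.Hom.op (eqToHom (hbrA1 ⟨j, j', δ⟩)) ≫ (s (V₀.pr j')).op from rfl]
      rw [FunctorToTypes.map_comp_apply]
      rw [tri_y_cast (hcn ⟨j, j', δ⟩ (n ⟨j, j', δ⟩) le_rfl).symm (hbrA1 ⟨j, j', δ⟩)]
    have hnatδ : (F.map δ).app X' ((F.obj j).map (s (V₀.pr j)).op (tj j).y) =
        (F.obj j').map (s (V₀.pr j)).op ((F.map δ).app (tj j).A (tj j).y) :=
      ConcreteCategory.congr_hom ((F.map δ).naturality (s (V₀.pr j)).op) (tj j).y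
    show (F.map δ).app X' ((F.obj j).map (s (V₀.pr j)).op (tj j).y) =
      (F.obj j').map (s (V₀.pr j')).op (tj j').y
    rw [hnatδ]
    rw [show (F.obj j').map (s (V₀.pr j)).op ((F.map δ).app (tj j).A (tj j).y) =
      (F.obj j').map (s (V₀.pr j)).op (push ⟨j, j', δ⟩).y from rfl]
    rw [← h0, ← h1]
    exact (hval (n ⟨j, j', δ⟩)).symm
  let sB : ∀ v : V₀ (J := J), X.unop ⟶ (a v).1.unop := fun v =>
    V₀.rec (fun j => (tj j).φ.unop) (fun d i => (c d i).φ.unop)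
      (fun _ ih => ih) (fun _ ih => ih) (fun j _ => (tj j).φ.unop) v
  have hcf : IsCF π X sB := by
    rintro e (⟨d, i, hcase | hcase⟩ | ⟨d, hcase⟩ | ⟨d, hcase⟩)
    · obtain ⟨u, hu, hy, rfl⟩ := hcase
      show (c d (i + 1)).φ.unop ≫ u.unop = (c d i).φ.unop
      rw [← hu]
      rfl
    · obtain ⟨u, hu, hy, rfl⟩ := hcase
      show (c d i).φ.unop ≫ u.unop = (c d (i + 1)).φ.unop
      rw [← hu]
      rfl
    · subst hcase
      show (tj d.1).φ.unop ≫ eqToHom (hbrA0 d) = (c d 0).φ.unop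
      exact tri_phi_cast (hc0 d).symm (hbrA0 d)
    · subst hcase
      show (tj d.2.1).φ.unop ≫ eqToHom (hbrA1 d) = (c d (n d)).φ.unop
      exact tri_phi_cast (hcn d (n d) le_rfl).symm (hbrA1 d)
  refine ⟨π, hv, mkN π sB hcf, ?_⟩
  apply lg_ext F ht
  intro j
  rw [lg_xval]
  rw [nlg_mkN]
  show (F.obj j).map ((tj j).φ.unop).op (tj j).y = lg F X x j
  rw [show ((tj j).φ.unop).op = (tj j).φ from rfl]
  exact htj j

end ClaimB
section Join

variable {F}

lemma joinPat {t : Cone F} (ht : IsLimit t) {Acl : Kᵒᵖ → Prop}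
    (hPWA : ∀ j, PW Acl (F.obj j))
    (π π' : Pat F Acl) (hv : Valid π) (hv' : Valid π')
    {X b b' : Kᵒᵖ} (f : b ⟶ X) (f' : b' ⟶ X)
    (nb : (NP π).obj b) (nb' : (NP π').obj b') {x : t.pt.obj X}
    (hxb : t.pt.map f (xval π ht hv b nb) = x)
    (hxb' : t.pt.map f' (xval π' ht hv' b' nb') = x) :
    ∃ (πJ : Pat F Acl) (hvJ : Valid πJ)
      (resL : ∀ W : Kᵒᵖ, (NP πJ).obj W → (NP π).obj W)
      (resR : ∀ W : Kᵒᵖ, (NP πJ).obj W → (NP π').obj W)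
      (zJ : (NP πJ).obj X),
      (∀ (W W' : Kᵒᵖ) (ψ : W ⟶ W') (z : (NP πJ).obj W),
          resL W' ((NP πJ).map ψ z) = (NP π).map ψ (resL W z)) ∧
      (∀ (W W' : Kᵒᵖ) (ψ : W ⟶ W') (z : (NP πJ).obj W),
          resR W' ((NP πJ).map ψ z) = (NP π').map ψ (resR W z)) ∧
      (∀ (W : Kᵒᵖ) (z : (NP πJ).obj W),
          xval π ht hv W (resL W z) = xval πJ ht hvJ W z) ∧
      (∀ (W : Kᵒᵖ) (z : (NP πJ).obj W),
          xval π' ht hv' W (resR W z) = xval πJ ht hvJ W z) ∧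
      resL X zJ = (NP π).map f nb ∧ resR X zJ = (NP π').map f' nb' := by
  classical
  -- the two X-level presentations of the legs of x
  let TL : ∀ j : J, Tri Acl (F.obj j) X := fun j =>
    ⟨(π.a (π.p j)).1, (π.a (π.p j)).2, (nlg π b nb (π.p j)).op ≫ f, π.ξ j⟩
  let TR : ∀ j : J, Tri Acl (F.obj j) X := fun j =>
    ⟨(π'.a (π'.p j)).1, (π'.a (π'.p j)).2, (nlg π' b' nb' (π'.p j)).op ≫ f', π'.ξ j⟩
  have hTL : ∀ j, trep (TL j) = lg F X x j := by
    intro j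
    show (F.obj j).map ((nlg π b nb (π.p j)).op ≫ f) (π.ξ j) = _
    rw [FunctorToTypes.map_comp_apply]
    rw [show (F.obj j).map (nlg π b nb (π.p j)).op (π.ξ j) =
      lg F b (xval π ht hv b nb) j from (lg_xval π ht hv b nb j).symm]
    rw [← lg_map, hxb]
  have hTR : ∀ j, trep (TR j) = lg F X x j := by
    intro j
    show (F.obj j).map ((nlg π' b' nb' (π'.p j)).op ≫ f') (π'.ξ j) = _
    rw [FunctorToTypes.map_comp_apply]
    rw [show (F.obj j).map (nlg π' b' nb' (π'.p j)).op (π'.ξ j) =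
      lg F b' (xval π' ht hv' b' nb') j from (lg_xval π' ht hv' b' nb' j).symm]
    rw [← lg_map, hxb']
  have hchain : ∀ j : J, ∃ (n : ℕ) (cc : ℕ → Tri Acl (F.obj j) X),
      cc 0 = TL j ∧ (∀ i, n ≤ i → cc i = TR j) ∧
      ∀ i, tstep (cc i) (cc (i + 1)) ∨ tstep (cc (i + 1)) (cc i) := by
    intro j
    exact eqvgen_chain (fun r => tstep_refl r)
      ((hPWA j X (lg F X x j)).2 (TL j) (TR j) (hTL j) (hTR j))
  choose nJ cJ hcJ0 hcJn hcJadj using hchain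
  let aJ : V₀ (J := J) → Subtype Acl := fun v =>
    match v with
    | .lft w => π.a w
    | .rgt w => π'.a w
    | .crs j i => ⟨(cJ j i).A, (cJ j i).hA⟩
    | .pr j => π.a (π.p j)
    | .ch d _ => π.a (π.p d.1)
  have hJ0 : ∀ j : J, (π.a (π.p j)).1.unop = (cJ j 0).A.unop := by
    intro j
    rw [hcJ0 j]
  have hJ1 : ∀ j : J, (π'.a (π'.p j)).1.unop = (cJ j (nJ j)).A.unop := by
    intro j
    rw [hcJn j (nJ j) le_rfl]
  let EdJ : Set (Σ v w : V₀ (J := J), ((aJ v).1.unop ⟶ (aJ w).1.unop)) := fun e =>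
    (∃ e₀ : Σ v w : V₀ (J := J), ((π.a v).1.unop ⟶ (π.a w).1.unop), e₀ ∈ π.Ed ∧
      e = ⟨V₀.lft e₀.1, V₀.lft e₀.2.1, e₀.2.2⟩) ∨
    (∃ e₀ : Σ v w : V₀ (J := J), ((π'.a v).1.unop ⟶ (π'.a w).1.unop), e₀ ∈ π'.Ed ∧
      e = ⟨V₀.rgt e₀.1, V₀.rgt e₀.2.1, e₀.2.2⟩) ∨
    (∃ (j : J) (i : ℕ),
      (∃ u : (cJ j i).A ⟶ (cJ j (i + 1)).A, u ≫ (cJ j (i + 1)).φ = (cJ j i).φ ∧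
        (F.obj j).map u (cJ j i).y = (cJ j (i + 1)).y ∧
        e = ⟨V₀.crs j (i + 1), V₀.crs j i, u.unop⟩) ∨
      (∃ u : (cJ j (i + 1)).A ⟶ (cJ j i).A, u ≫ (cJ j i).φ = (cJ j (i + 1)).φ ∧
        (F.obj j).map u (cJ j (i + 1)).y = (cJ j i).y ∧
        e = ⟨V₀.crs j i, V₀.crs j (i + 1), u.unop⟩)) ∨
    (∃ j : J, e = ⟨V₀.lft (π.p j), V₀.crs j 0, eqToHom (hJ0 j)⟩) ∨
    (∃ j : J, e = ⟨V₀.rgt (π'.p j), V₀.crs j (nJ j), eqToHom (hJ1 j)⟩)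
  let πJ : Pat F Acl := ⟨aJ, EdJ, fun j => V₀.lft (π.p j), fun j => π.ξ j⟩
  -- restriction of cone families
  have hcfL : ∀ (W : Kᵒᵖ) (z : (NP πJ).obj W),
      IsCF π W (fun v => nlg πJ W z (V₀.lft v)) := by
    intro W z e he
    exact nlg_cf πJ W z ⟨V₀.lft e.1, V₀.lft e.2.1, e.2.2⟩ (Or.inl ⟨e, he, rfl⟩)
  have hcfR : ∀ (W : Kᵒᵖ) (z : (NP πJ).obj W),
      IsCF π' W (fun v => nlg πJ W z (V₀.rgt v)) := by
    intro W z e he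
    exact nlg_cf πJ W z ⟨V₀.rgt e.1, V₀.rgt e.2.1, e.2.2⟩ (Or.inr (Or.inl ⟨e, he, rfl⟩))
  have hvJ : Valid πJ := by
    intro W s hs j j' δ
    have hsL : IsCF π W (fun v => s (V₀.lft v)) := by
      intro e he
      exact hs ⟨V₀.lft e.1, V₀.lft e.2.1, e.2.2⟩ (Or.inl ⟨e, he, rfl⟩)
    exact hv W (fun v => s (V₀.lft v)) hsL δ
  -- cross-validity
  have hcross : ∀ (W : Kᵒᵖ) (s : ∀ v : V₀ (J := J), W.unop ⟶ ((πJ.a v).1.unop)),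
      IsCF πJ W s → ∀ j : J,
      (F.obj j).map (s (V₀.lft (π.p j))).op (π.ξ j) =
        (F.obj j).map (s (V₀.rgt (π'.p j))).op (π'.ξ j) := by
    intro W s hs j
    have hval : ∀ i : ℕ, (F.obj j).map (s (V₀.crs j i)).op (cJ j i).y =
        (F.obj j).map (s (V₀.crs j 0)).op (cJ j 0).y := by
      intro i
      induction i with
      | zero => rfl
      | succ i ih =>
        rcases hcJadj j i with ⟨u, hu, hy⟩ | ⟨u, hu, hy⟩
        · have hedge := hs ⟨V₀.crs j (i + 1), V₀.crs j i, u.unop⟩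
            (Or.inr (Or.inr (Or.inl ⟨j, i, Or.inl ⟨u, hu, hy, rfl⟩⟩)))
          rw [← ih]
          exact step_val u hy hedge
        · have hedge := hs ⟨V₀.crs j i, V₀.crs j (i + 1), u.unop⟩
            (Or.inr (Or.inr (Or.inl ⟨j, i, Or.inr ⟨u, hu, hy, rfl⟩⟩)))
          rw [← ih]
          exact (step_val u hy hedge).symm
    have hbr0 := hs ⟨V₀.lft (π.p j), V₀.crs j 0, eqToHom (hJ0 j)⟩
      (Or.inr (Or.inr (Or.inr (Or.inl ⟨j, rfl⟩))))
    have hbr1 := hs ⟨V₀.rgt (π'.p j), V₀.crs j (nJ j), eqToHom (hJ1 j)⟩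
      (Or.inr (Or.inr (Or.inr (Or.inr ⟨j, rfl⟩))))
    have h0 : (F.obj j).map (s (V₀.crs j 0)).op (cJ j 0).y =
        (F.obj j).map (s (V₀.lft (π.p j))).op (π.ξ j) := by
      rw [← hbr0]
      rw [show ((s (V₀.lft (π.p j)) ≫ eqToHom (hJ0 j))).op =
        Quiver.Hom.op (eqToHom (hJ0 j)) ≫ (s (V₀.lft (π.p j))).op from rfl]
      rw [FunctorToTypes.map_comp_apply]
      rw [tri_y_cast (hcJ0 j).symm (hJ0 j)]
    have h1 : (F.obj j).map (s (V₀.crs j (nJ j))).op (cJ j (nJ j)).y =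
        (F.obj j).map (s (V₀.rgt (π'.p j))).op (π'.ξ j) := by
      rw [← hbr1]
      rw [show ((s (V₀.rgt (π'.p j)) ≫ eqToHom (hJ1 j))).op =
        Quiver.Hom.op (eqToHom (hJ1 j)) ≫ (s (V₀.rgt (π'.p j))).op from rfl]
      rw [FunctorToTypes.map_comp_apply]
      rw [tri_y_cast (hcJn j (nJ j) le_rfl).symm (hJ1 j)]
    rw [← h0, ← h1]
    exact (hval (nJ j)).symm
  -- the restrictions
  let resL : ∀ W : Kᵒᵖ, (NP πJ).obj W → (NP π).obj W := fun W z =>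
    mkN π (fun v => nlg πJ W z (V₀.lft v)) (hcfL W z)
  let resR : ∀ W : Kᵒᵖ, (NP πJ).obj W → (NP π').obj W := fun W z =>
    mkN π' (fun v => nlg πJ W z (V₀.rgt v)) (hcfR W z)
  -- the joint cone at X
  let sJ : ∀ v : V₀ (J := J), X.unop ⟶ ((πJ.a v).1.unop) := fun v =>
    match v with
    | .lft w => f.unop ≫ nlg π b nb w
    | .rgt w => f'.unop ≫ nlg π' b' nb' w
    | .crs j i => (cJ j i).φ.unop
    | .pr j => f.unop ≫ nlg π b nb (π.p j)
    | .ch d _ => f.unop ≫ nlg π b nb (π.p d.1)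
  have hsJ : IsCF πJ X sJ := by
    rintro e (⟨e₀, he₀, rfl⟩ | ⟨e₀, he₀, rfl⟩ |
      ⟨j, i, ⟨u, hu, hy, rfl⟩ | ⟨u, hu, hy, rfl⟩⟩ | ⟨j, rfl⟩ | ⟨j, rfl⟩)
    · show (f.unop ≫ nlg π b nb e₀.1) ≫ e₀.2.2 = f.unop ≫ nlg π b nb e₀.2.1
      rw [Category.assoc, nlg_cf π b nb e₀ he₀]
    · show (f'.unop ≫ nlg π' b' nb' e₀.1) ≫ e₀.2.2 = f'.unop ≫ nlg π' b' nb' e₀.2.1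
      rw [Category.assoc, nlg_cf π' b' nb' e₀ he₀]
    · show (cJ j (i + 1)).φ.unop ≫ u.unop = (cJ j i).φ.unop
      rw [← hu]
      rfl
    · show (cJ j i).φ.unop ≫ u.unop = (cJ j (i + 1)).φ.unop
      rw [← hu]
      rfl
    · show (f.unop ≫ nlg π b nb (π.p j)) ≫ eqToHom (hJ0 j) = (cJ j 0).φ.unop
      have : (TL j).φ.unop ≫ eqToHom (hJ0 j) = (cJ j 0).φ.unop :=
        tri_phi_cast (hcJ0 j).symm (hJ0 j)
      exact this
    · show (f'.unop ≫ nlg π' b' nb' (π'.p j)) ≫ eqToHom (hJ1 j) = (cJ j (nJ j)).φ.unop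
      have : (TR j).φ.unop ≫ eqToHom (hJ1 j) = (cJ j (nJ j)).φ.unop :=
        tri_phi_cast (hcJn j (nJ j) le_rfl).symm (hJ1 j)
      exact this
  refine ⟨πJ, hvJ, resL, resR, mkN πJ sJ hsJ, ?_, ?_, ?_, ?_, ?_, ?_⟩
  · intro W W' ψ z
    apply n_ext
    intro v
    rw [show resL W' ((NP πJ).map ψ z) =
      mkN π (fun v => nlg πJ W' ((NP πJ).map ψ z) (V₀.lft v)) (hcfL W' _) from rfl]
    rw [nlg_mkN, nlg_map, nlg_map]
    rw [show resL W z = mkN π (fun v => nlg πJ W z (V₀.lft v)) (hcfL W z) from rfl]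
    rw [nlg_mkN]
  · intro W W' ψ z
    apply n_ext
    intro v
    rw [show resR W' ((NP πJ).map ψ z) =
      mkN π' (fun v => nlg πJ W' ((NP πJ).map ψ z) (V₀.rgt v)) (hcfR W' _) from rfl]
    rw [nlg_mkN, nlg_map, nlg_map]
    rw [show resR W z = mkN π' (fun v => nlg πJ W z (V₀.rgt v)) (hcfR W z) from rfl]
    rw [nlg_mkN]
  · intro W z
    apply lg_ext F ht
    intro j
    rw [lg_xval, lg_xval]
    rw [show resL W z = mkN π (fun v => nlg πJ W z (V₀.lft v)) (hcfL W z) from rfl]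
    rw [nlg_mkN]
  · intro W z
    apply lg_ext F ht
    intro j
    rw [lg_xval, lg_xval]
    rw [show resR W z = mkN π' (fun v => nlg πJ W z (V₀.rgt v)) (hcfR W z) from rfl]
    rw [nlg_mkN]
    exact (hcross W (nlg πJ W z) (nlg_cf πJ W z) j).symm
  · apply n_ext
    intro v
    rw [show resL X (mkN πJ sJ hsJ) =
      mkN π (fun v => nlg πJ X (mkN πJ sJ hsJ) (V₀.lft v)) (hcfL X _) from rfl]
    rw [nlg_mkN, nlg_mkN, nlg_map]
  · apply n_ext
    intro v
    rw [show resR X (mkN πJ sJ hsJ) =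
      mkN π' (fun v => nlg πJ X (mkN πJ sJ hsJ) (V₀.rgt v)) (hcfR X _) from rfl]
    rw [nlg_mkN, nlg_mkN, nlg_map]

end Join
section Assembly

variable {F}

theorem crux (Hyp : ∀ (D : Cat.{v, v}) (S : ↑D ⥤ K),
      IsSmallFunctor.{v} ((S ⋙ yoneda).flip ⋙ lim))
    (hF : ∀ j, IsSmallFunctor.{v} (F.obj j)) (t : Cone F) (ht : IsLimit t) :
    IsSmallFunctor.{v} t.pt := by
  classical
  have h0 : ∀ j, ∃ P : Kᵒᵖ → Prop, Small.{v} (Subtype P) ∧ PW P (F.obj j) :=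
    fun j => (isSmall_iff_pw (F.obj j)).mp (hF j)
  choose Pj hPs hPpw using h0
  set Acl : Kᵒᵖ → Prop := fun A => ∃ j, Pj j A with hAcl
  haveI : ∀ j, Small.{v} (Subtype (Pj j)) := hPs
  haveI hAclSmall : Small.{v} (Subtype Acl) := by
    apply small_of_surjective (f := fun q : Σ j, Subtype (Pj j) =>
      (⟨q.2.1, ⟨q.1, q.2.2⟩⟩ : Subtype Acl))
    rintro ⟨A, j, hA⟩
    exact ⟨⟨j, ⟨A, hA⟩⟩, rfl⟩
  have hPWA : ∀ j, PW Acl (F.obj j) :=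
    fun j => pw_mono (fun A hA => ⟨j, hA⟩) (hPpw j)
  have hNP : ∀ π : Pat F Acl, IsSmallFunctor.{v} (NP π) := by
    intro π
    exact Hyp (Cat.of (Paths (PQ π))) (SP π)
  have h1 : ∀ π : Pat F Acl, ∃ P : Kᵒᵖ → Prop, Small.{v} (Subtype P) ∧ PW P (NP π) :=
    fun π => (isSmall_iff_pw (NP π)).mp (hNP π)
  choose PN hPNs hPNpw using h1
  set B : Kᵒᵖ → Prop := fun A => Acl A ∨ ∃ π : Pat F Acl, PN π A with hB
  have hBSmall : Small.{v} (Subtype B) := by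
    haveI : ∀ π : Pat F Acl, Small.{v} (Subtype (PN π)) := hPNs
    apply small_of_surjective (f := fun q : (Subtype Acl) ⊕ (Σ π : Pat F Acl, Subtype (PN π)) =>
      (Sum.elim (fun a => (⟨a.1, Or.inl a.2⟩ : Subtype B))
        (fun q => (⟨q.2.1, Or.inr ⟨q.1, q.2.2⟩⟩ : Subtype B)) q))
    rintro ⟨A, hA | ⟨π, hA⟩⟩
    · exact ⟨Sum.inl ⟨A, hA⟩, rfl⟩
    · exact ⟨Sum.inr ⟨π, ⟨A, hA⟩⟩, rfl⟩
  rw [isSmall_iff_pw]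
  refine ⟨B, hBSmall, ?_⟩
  intro X x
  constructor
  · obtain ⟨π, hvπ, z, hz⟩ := claimB ht Acl hPWA X x
    obtain ⟨r, hr⟩ := (hPNpw π X z).1
    refine ⟨⟨r.A, Or.inr ⟨π, r.hA⟩, r.φ, xval π ht hvπ r.A r.y⟩, ?_⟩
    show t.pt.map r.φ (xval π ht hvπ r.A r.y) = x
    rw [← xval_map π ht hvπ r.φ r.y]
    rw [show (NP π).map r.φ r.y = z from hr]
    exact hz
  · intro r r' hr hr'
    obtain ⟨π, hvπ, nb, hnb⟩ := claimB ht Acl hPWA r.A r.y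
    obtain ⟨π', hvπ', nb', hnb'⟩ := claimB ht Acl hPWA r'.A r'.y
    have hxb : t.pt.map r.φ (xval π ht hvπ r.A nb) = x := by
      rw [hnb]
      exact hr
    have hxb' : t.pt.map r'.φ (xval π' ht hvπ' r'.A nb') = x := by
      rw [hnb']
      exact hr'
    obtain ⟨πJ, hvJ, resL, resR, zJ, hresLnat, hresRnat, hxresL, hxresR, hzL, hzR⟩ :=
      joinPat ht hPWA π π' hvπ hvπ' r.φ r'.φ nb nb' hxb hxb'
    obtain ⟨ρ, hρ⟩ := (hPNpw πJ X zJ).1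
    set mid : Tri B t.pt X :=
      ⟨ρ.A, Or.inr ⟨πJ, ρ.hA⟩, ρ.φ, xval πJ ht hvJ ρ.A ρ.y⟩ with hmid
    have key : ∀ (π₀ : Pat F Acl) (hv₀ : Valid π₀)
        (res : ∀ W : Kᵒᵖ, (NP πJ).obj W → (NP π₀).obj W)
        (hresnat : ∀ (W W' : Kᵒᵖ) (ψ : W ⟶ W') (z : (NP πJ).obj W),
          res W' ((NP πJ).map ψ z) = (NP π₀).map ψ (res W z))
        (hxres : ∀ (W : Kᵒᵖ) (z : (NP πJ).obj W),
          xval π₀ ht hv₀ W (res W z) = xval πJ ht hvJ W z)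
        (r₀ : Tri B t.pt X) (nb₀ : (NP π₀).obj r₀.A)
        (hnb₀ : xval π₀ ht hv₀ r₀.A nb₀ = r₀.y)
        (hz₀ : res X zJ = (NP π₀).map r₀.φ nb₀),
        Relation.EqvGen tstep r₀ mid := by
      intro π₀ hv₀ res hresnat hxres r₀ nb₀ hnb₀ hz₀
      have hPWB : PW B (NP π₀) := pw_mono (fun A hA => Or.inr ⟨π₀, hA⟩) (hPNpw π₀)
      have hτ1 : trep (⟨r₀.A, r₀.hA, r₀.φ, nb₀⟩ : Tri B (NP π₀) X) =
          (NP π₀).map r₀.φ nb₀ := rfl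
      have hτ2 : trep (⟨ρ.A, Or.inr ⟨πJ, ρ.hA⟩, ρ.φ, res ρ.A ρ.y⟩ : Tri B (NP π₀) X) =
          (NP π₀).map r₀.φ nb₀ := by
        show (NP π₀).map ρ.φ (res ρ.A ρ.y) = _
        rw [← hresnat ρ.A X ρ.φ ρ.y]
        rw [show (NP πJ).map ρ.φ ρ.y = zJ from hρ, hz₀]
      have hconn := (hPWB X ((NP π₀).map r₀.φ nb₀)).2 _ _ hτ1 hτ2
      have hmap := eqvgen_map (s := tstep)
        (f := fun τ : Tri B (NP π₀) X =>
          (⟨τ.A, τ.hA, τ.φ, xval π₀ ht hv₀ τ.A τ.y⟩ : Tri B t.pt X))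
        (fun τ σ hst => by
          obtain ⟨u, hu, hy⟩ := hst
          refine ⟨u, hu, ?_⟩
          show t.pt.map u (xval π₀ ht hv₀ τ.A τ.y) = xval π₀ ht hv₀ σ.A σ.y
          rw [← xval_map π₀ ht hv₀ u τ.y, hy]) hconn
      simp only at hmap
      have he1 : (⟨r₀.A, r₀.hA, r₀.φ, xval π₀ ht hv₀ r₀.A nb₀⟩ : Tri B t.pt X) = r₀ := by
        rw [hnb₀]
      have he2 : (⟨ρ.A, Or.inr ⟨πJ, ρ.hA⟩, ρ.φ,
          xval π₀ ht hv₀ ρ.A (res ρ.A ρ.y)⟩ : Tri B t.pt X) = mid := by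
        rw [hxres ρ.A ρ.y]
      rw [he1, he2] at hmap
      exact hmap
    have hL := key π hvπ resL hresLnat hxresL r nb hnb hzL
    have hR := key π' hvπ' resR hresRnat hxresR r' nb' hnb' hzR
    exact hL.trans _ _ _ (hR.symm _ _)

end Assembly

theorem partII (Hyp : ∀ (D : Cat.{v, v}) (S : ↑D ⥤ K),
      IsSmallFunctor.{v} ((S ⋙ yoneda).flip ⋙ lim)) :
    HasLimitsOfSize.{v, v} (SmallPresheaf K) := by
  refine ⟨fun J' => ?_⟩
  intro hJ'
  haveI : ObjectProperty.IsClosedUnderLimitsOfShape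
      (fun F : Kᵒᵖ ⥤ Type v => IsSmallFunctor.{v} F) J' :=
    ⟨by
      rintro X ⟨p⟩
      exact crux (F := p.diag) Hyp p.prop_diag_obj (Cone.mk _ p.π) p.isLimit⟩
  apply hasLimitsOfShape_of_closedUnderLimits

end PartII

end S7Aux

/-- `PK` is complete iff it has all limits of representables, i.e. iff for
every small diagram `S : D ⥤ K` the presheaf `A ↦ lim_d K(A, S d)` is small. -/
theorem statement7 {K : Type u} [Category.{v} K] :
    HasLimitsOfSize.{v, v} (SmallPresheaf K) ↔
      ∀ (D : Cat.{v, v}) (S : D ⥤ K),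
        IsSmallFunctor.{v} ((S ⋙ yoneda).flip ⋙ lim) := by
  constructor
  · intro h D S
    exact S7Aux.partI D S
  · intro hyp
    exact S7Aux.partII hyp
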